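/- arXiv:0906.5305 — 2 statements merged into one kernel-verified Lean document; each statement's English description precedes it below -/
import Mathlib

section
/- Let θ ∈ [0,1]. For any finite sequence of positive reals λ₁,…,λ_n, the n×n matrix with entries (λ_i + λ_j)^θ / max(λ_i, λ_j)^θ factors as ⟨ξ_i, η_j⟩ with sup_i ‖ξ_i‖ · sup_j ‖η_j‖ ≤ 2^θ in some Hilbert space; in particular its Schur (Hadamard) multiplier norm on n×n matrices is at most 2^θ. -/
open Real MeasureTheory Set Filter Topology Matrix
open scoped ComplexOrder

noncomputable def fth (θ t : ℝ) : ℝ := (1 + Real.exp (-t)) ^ θ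
noncomputable def fdd (θ t : ℝ) : ℝ := -(θ * Real.exp (-t) * (1 + Real.exp (-t)) ^ (θ - 1))
noncomputable def wth (θ t : ℝ) : ℝ :=
  θ * Real.exp (-t) * (1 + Real.exp (-t)) ^ (θ - 2) * (1 + θ * Real.exp (-t))

lemma upos (t : ℝ) : (0:ℝ) < 1 + Real.exp (-t) := by positivity

lemma hasDerivAt_exp_neg (t : ℝ) :
    HasDerivAt (fun s : ℝ => Real.exp (-s)) (-(Real.exp (-t))) t := by
  simpa [Function.comp_def] using (Real.hasDerivAt_exp (-t)).comp t (hasDerivAt_neg t)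

lemma hasDerivAt_u (t : ℝ) :
    HasDerivAt (fun s : ℝ => 1 + Real.exp (-s)) (-(Real.exp (-t))) t :=
  (hasDerivAt_exp_neg t).const_add 1

lemma hasDerivAt_fth (θ t : ℝ) : HasDerivAt (fth θ) (fdd θ t) t := by
  have h := (hasDerivAt_u t).rpow_const (p := θ) (Or.inl (upos t).ne')
  convert h using 1
  · rfl
  unfold fdd; ring

lemma hasDerivAt_fdd (θ t : ℝ) : HasDerivAt (fdd θ) (wth θ t) t := by
  have h1 := (hasDerivAt_u t).rpow_const (p := θ - 1) (Or.inl (upos t).ne')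
  have h2 := ((hasDerivAt_exp_neg t).mul h1).const_mul θ
  have hfun : fdd θ = fun s => -(θ * (Real.exp (-s) * (1 + Real.exp (-s)) ^ (θ - 1))) := by
    funext s; unfold fdd; ring
  rw [hfun]
  refine h2.neg.congr_deriv ?_
  have key : (1 + Real.exp (-t)) ^ (θ - 1) = (1 + Real.exp (-t)) ^ (θ - 2) * (1 + Real.exp (-t)) := by
    rw [← Real.rpow_add_one (upos t).ne']
    ring_nf
  unfold wth
  rw [key]
  ring

lemma wth_nonneg (θ t : ℝ) (hθ : 0 ≤ θ) : 0 ≤ wth θ t := by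
  unfold wth
  have := (upos t).le
  have := Real.exp_nonneg (-t)
  have : (0:ℝ) ≤ (1 + Real.exp (-t)) ^ (θ - 2) := Real.rpow_nonneg (upos t).le _
  positivity

lemma tendsto_u : Tendsto (fun a : ℝ => 1 + Real.exp (-a)) atTop (𝓝 1) := by
  simpa using (Real.tendsto_exp_neg_atTop_nhds_zero).const_add 1

lemma tendsto_u_rpow (p : ℝ) :
    Tendsto (fun a : ℝ => (1 + Real.exp (-a)) ^ p) atTop (𝓝 1) := by
  have h := (Real.continuousAt_rpow_const 1 p (Or.inl one_ne_zero)).tendsto.comp tendsto_u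
  simpa [Function.comp_def] using h

lemma tendsto_lin_exp (c : ℝ) :
    Tendsto (fun a : ℝ => (a - c) * Real.exp (-a)) atTop (𝓝 0) := by
  have h1 := tendsto_pow_mul_exp_neg_atTop_nhds_zero 1
  have h2 := (Real.tendsto_exp_neg_atTop_nhds_zero).const_mul c
  have h := h1.sub h2
  simp only [pow_one, mul_zero, sub_zero] at h
  convert h using 2 with a
  ring

lemma repr_Ioi_c (θ c : ℝ) (hθ : 0 ≤ θ) :
    IntegrableOn (fun a => wth θ a * max 0 (a - c)) (Ioi c) ∧
    ∫ a in Ioi c, wth θ a * max 0 (a - c) = fth θ c - 1 := by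
  set G : ℝ → ℝ := fun a => (a - c) * fdd θ a - fth θ a with hG
  have hderiv : ∀ a ∈ Ici c, HasDerivAt G (wth θ a * max 0 (a - c)) a := by
    intro a ha
    have h1 : HasDerivAt (fun a : ℝ => (a - c) * fdd θ a)
        (1 * fdd θ a + (a - c) * wth θ a) a :=
      ((hasDerivAt_id a).sub_const c).mul (hasDerivAt_fdd θ a)
    have h2 := h1.sub (hasDerivAt_fth θ a)
    have h3 : 1 * fdd θ a + (a - c) * wth θ a - fdd θ a = wth θ a * max 0 (a - c) := by
      rw [max_eq_right (sub_nonneg.2 ha)]; ring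
    rw [← h3]
    exact h2
  have hpos : ∀ a ∈ Ioi c, 0 ≤ wth θ a * max 0 (a - c) :=
    fun a _ => mul_nonneg (wth_nonneg θ a hθ) (le_max_left _ _)
  have hlim : Tendsto G atTop (𝓝 (-1)) := by
    have t1 : Tendsto (fun a => (a - c) * fdd θ a) atTop (𝓝 0) := by
      have := ((tendsto_lin_exp c).mul (tendsto_u_rpow (θ - 1))).const_mul (-θ)
      simp only [mul_zero, zero_mul, mul_one] at this
      convert this using 2 with a
      unfold fdd; ring
    have t2 : Tendsto (fun a => fth θ a) atTop (𝓝 1) := tendsto_u_rpow θ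
    have := t1.sub t2
    simpa using this
  refine ⟨integrableOn_Ioi_deriv_of_nonneg' hderiv hpos hlim, ?_⟩
  rw [integral_Ioi_of_hasDerivAt_of_nonneg' hderiv hpos hlim]
  have : G c = -fth θ c := by simp [hG]
  rw [this]; ring

lemma repr_Ioi (θ c : ℝ) (hθ : 0 ≤ θ) (hc : 0 ≤ c) :
    IntegrableOn (fun a => wth θ a * max 0 (a - c)) (Ioi 0) ∧
    ∫ a in Ioi (0:ℝ), wth θ a * max 0 (a - c) = fth θ c - 1 := by
  obtain ⟨hint, heq⟩ := repr_Ioi_c θ c hθ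
  have hzero : EqOn (fun a => wth θ a * max 0 (a - c)) (fun _ => (0:ℝ)) (Ioc 0 c) := by
    intro a ha
    simp only
    rw [max_eq_left (sub_nonpos.2 ha.2)]
    ring
  have hioc : IntegrableOn (fun a => wth θ a * max 0 (a - c)) (Ioc 0 c) := by
    rw [integrableOn_congr_fun hzero measurableSet_Ioc]
    exact integrableOn_const measure_Ioc_lt_top.ne
  have hunion : Ioc (0:ℝ) c ∪ Ioi c = Ioi 0 := Ioc_union_Ioi_eq_Ioi hc
  constructor
  · rw [← hunion]; exact hioc.union hint
  · rw [← hunion, setIntegral_union (Ioc_disjoint_Ioi le_rfl) measurableSet_Ioi hioc hint,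
      heq]
    rw [setIntegral_congr_fun measurableSet_Ioc hzero]
    simp

lemma vol_inter (u v a : ℝ) :
    (volume (Ioc u (u + a) ∩ Ioc v (v + a))).toReal = max 0 (a - |u - v|) := by
  rw [Set.Ioc_inter_Ioc, Real.volume_Ioc]
  have h1 : min (u + a) (v + a) - max u v = a - |u - v| := by
    rcases le_total u v with h | h
    · rw [max_eq_right h, min_eq_left (by linarith), abs_of_nonpos (by linarith)]; ring
    · rw [max_eq_left h, min_eq_right (by linarith), abs_of_nonneg (by linarith)]; ring
  rw [h1]
  rcases le_total (a - |u - v|) 0 with h | h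
  · rw [ENNReal.ofReal_eq_zero.2 h, max_eq_left h]; simp
  · rw [ENNReal.toReal_ofReal h, max_eq_right h]

lemma tent_psd (n : ℕ) (a : ℝ) (t : Fin n → ℝ) (z : Fin n → ℂ) :
    0 ≤ ∑ i, ∑ j, ((starRingEnd ℂ) (z i) * z j).re * max 0 (a - |t i - t j|) := by
  classical
  set I : Fin n → Set ℝ := fun i => Ioc (t i) (t i + a) with hI
  have hmeas : ∀ i, MeasurableSet (I i) := fun i => measurableSet_Ioc
  set F : ℝ → ℂ := fun x => ∑ i, (I i).indicator (fun _ => z i) x with hF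
  have hpoint : ∀ x, ‖F x‖ ^ 2
      = ∑ i, ∑ j, (I i ∩ I j).indicator
          (fun _ => ((starRingEnd ℂ) (z i) * z j).re) x := by
    intro x
    have h0 : ‖F x‖ ^ 2 = ((starRingEnd ℂ) (F x) * F x).re := by
      rw [Complex.mul_re]
      simp [Complex.sq_norm, Complex.normSq_apply]
      try ring
    rw [h0, hF]
    simp only [map_sum]
    rw [Finset.sum_mul_sum, Complex.re_sum]
    refine Finset.sum_congr rfl fun i _ => ?_
    rw [Complex.re_sum]
    refine Finset.sum_congr rfl fun j _ => ?_
    by_cases hi : x ∈ I i <;> by_cases hj : x ∈ I j <;>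
      simp [Set.indicator, hi, hj]
  have hint : ∀ (i j : Fin n), Integrable ((I i ∩ I j).indicator
      (fun _ => ((starRingEnd ℂ) (z i) * z j).re)) := by
    intro i j
    rw [integrable_indicator_iff ((hmeas i).inter (hmeas j))]
    refine integrableOn_const (ne_of_lt ?_)
    exact lt_of_le_of_lt (measure_mono inter_subset_left) measure_Ioc_lt_top
  have key : ∑ i, ∑ j, ((starRingEnd ℂ) (z i) * z j).re * max 0 (a - |t i - t j|)
      = ∫ x, ‖F x‖ ^ 2 := by
    rw [MeasureTheory.integral_congr_ae (Filter.Eventually.of_forall hpoint)]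
    rw [integral_finset_sum _ (fun i _ => integrable_finset_sum _ (fun j _ => hint i j))]
    refine Finset.sum_congr rfl fun i _ => ?_
    rw [integral_finset_sum _ (fun j _ => hint i j)]
    refine Finset.sum_congr rfl fun j _ => ?_
    rw [integral_indicator_const _ ((hmeas i).inter (hmeas j))]
    rw [smul_eq_mul, mul_comm, hI]
    simp only
    rw [measureReal_def, vol_inter]
  rw [key]
  exact integral_nonneg fun x => sq_nonneg _

lemma real_quad_nonneg (θ : ℝ) (hθ : 0 ≤ θ) {n : ℕ} (t : Fin n → ℝ) (z : Fin n → ℂ) :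
    0 ≤ ∑ i, ∑ j, ((starRingEnd ℂ) (z i) * z j).re * fth θ |t i - t j| := by
  classical
  set r : Fin n → Fin n → ℝ := fun i j => ((starRingEnd ℂ) (z i) * z j).re with hr
  have hsplit : ∑ i, ∑ j, r i j * fth θ |t i - t j|
      = (∑ i, ∑ j, r i j)
        + ∑ i, ∑ j, r i j * ∫ a in Ioi (0:ℝ), wth θ a * max 0 (a - |t i - t j|) := by
    rw [← Finset.sum_add_distrib]
    refine Finset.sum_congr rfl fun i _ => ?_
    rw [← Finset.sum_add_distrib]
    refine Finset.sum_congr rfl fun j _ => ?_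
    rw [(repr_Ioi θ _ hθ (abs_nonneg _)).2]; ring
  rw [hsplit]
  have h1 : 0 ≤ ∑ i, ∑ j, r i j := by
    have e1 : ∑ i, ∑ j, r i j = ((∑ i, (starRingEnd ℂ) (z i)) * ∑ j, z j).re := by
      rw [Finset.sum_mul_sum, Complex.re_sum]
      exact Finset.sum_congr rfl fun i _ => (Complex.re_sum _ _).symm
    rw [e1, ← map_sum, mul_comm, Complex.mul_conj]
    simp [Complex.normSq_nonneg]
  have h2 : 0 ≤ ∑ i, ∑ j, r i j
      * ∫ a in Ioi (0:ℝ), wth θ a * max 0 (a - |t i - t j|) := by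
    have e2 : ∑ i, ∑ j, r i j * ∫ a in Ioi (0:ℝ), wth θ a * max 0 (a - |t i - t j|)
        = ∫ a in Ioi (0:ℝ), ∑ p : Fin n × Fin n,
            r p.1 p.2 * (wth θ a * max 0 (a - |t p.1 - t p.2|)) := by
      rw [MeasureTheory.integral_finset_sum _
        (fun p _ => ((repr_Ioi θ _ hθ (abs_nonneg _)).1.const_mul _))]
      rw [Fintype.sum_prod_type]
      refine Finset.sum_congr rfl fun i _ => ?_
      refine Finset.sum_congr rfl fun j _ => ?_
      rw [MeasureTheory.integral_const_mul]
    rw [e2]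
    refine setIntegral_nonneg measurableSet_Ioi fun a _ => ?_
    have e3 : ∑ p : Fin n × Fin n, r p.1 p.2 * (wth θ a * max 0 (a - |t p.1 - t p.2|))
        = wth θ a * ∑ p : Fin n × Fin n, r p.1 p.2 * max 0 (a - |t p.1 - t p.2|) := by
      rw [Finset.mul_sum]
      exact Finset.sum_congr rfl fun p _ => by ring
    rw [e3]
    refine mul_nonneg (wth_nonneg θ a hθ) ?_
    rw [Fintype.sum_prod_type]
    exact tent_psd n a t z
  linarith

noncomputable def Mmat (θ : ℝ) {n : ℕ} (t : Fin n → ℝ) : Matrix (Fin n) (Fin n) ℂ :=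
  Matrix.of fun i j => ((fth θ |t i - t j| : ℝ) : ℂ)

lemma Mmat_herm (θ : ℝ) {n : ℕ} (t : Fin n → ℝ) : (Mmat θ t).IsHermitian := by
  ext i j
  simp [Matrix.conjTranspose_apply, Mmat, abs_sub_comm (t j) (t i)]

lemma quad_eq (θ : ℝ) {n : ℕ} (t : Fin n → ℝ) (z : Fin n → ℂ) :
    dotProduct (star z) ((Mmat θ t) *ᵥ z)
      = ((∑ i, ∑ j, ((starRingEnd ℂ) (z i) * z j).re * fth θ |t i - t j| : ℝ) : ℂ) := by
  have expand : dotProduct (star z) ((Mmat θ t) *ᵥ z)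
      = ∑ i, ∑ j, ((fth θ |t i - t j| : ℝ) : ℂ) * ((starRingEnd ℂ) (z i) * z j) := by
    simp only [dotProduct, Matrix.mulVec, Pi.star_apply, Mmat, Matrix.of_apply]
    refine Finset.sum_congr rfl fun i _ => ?_
    rw [Finset.mul_sum]
    refine Finset.sum_congr rfl fun j _ => ?_
    simp [dotProduct]
    ring
  rw [expand]
  apply Complex.ext
  · rw [Complex.re_sum]
    rw [Complex.ofReal_re]
    refine Finset.sum_congr rfl fun i _ => ?_
    rw [Complex.re_sum]
    refine Finset.sum_congr rfl fun j _ => ?_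
    rw [Complex.re_ofReal_mul]
    ring
  · rw [Complex.im_sum, Complex.ofReal_im]
    have anti : ∀ i j : Fin n,
        (((fth θ |t j - t i| : ℝ) : ℂ) * ((starRingEnd ℂ) (z j) * z i)).im
        = -(((fth θ |t i - t j| : ℝ) : ℂ) * ((starRingEnd ℂ) (z i) * z j)).im := by
      intro i j
      rw [Complex.im_ofReal_mul, Complex.im_ofReal_mul, abs_sub_comm (t j) (t i)]
      have : ((starRingEnd ℂ) (z j) * z i) = (starRingEnd ℂ) ((starRingEnd ℂ) (z i) * z j) := by
        simp [mul_comm]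
      rw [this, Complex.conj_im]
      ring
    have hS : (∑ i, ∑ j, (((fth θ |t i - t j| : ℝ) : ℂ) * ((starRingEnd ℂ) (z i) * z j)).im)
        = -(∑ i, ∑ j, (((fth θ |t i - t j| : ℝ) : ℂ) * ((starRingEnd ℂ) (z i) * z j)).im) := by
      nth_rewrite 1 [Finset.sum_comm]
      rw [← Finset.sum_neg_distrib]
      refine Finset.sum_congr rfl fun i _ => ?_
      rw [← Finset.sum_neg_distrib]
      exact Finset.sum_congr rfl fun j _ => anti i j
    have := hS
    simp only [Complex.im_sum] at this ⊢
    linarith [hS]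

lemma Mmat_psd (θ : ℝ) (hθ : 0 ≤ θ) {n : ℕ} (t : Fin n → ℝ) : (Mmat θ t).PosSemidef :=
  Matrix.posSemidef_iff_dotProduct_mulVec.2 ⟨Mmat_herm θ t, fun z => by
    rw [quad_eq]
    exact Complex.zero_le_real.2 (real_quad_nonneg θ hθ t z)⟩

lemma fth_zero (θ : ℝ) : fth θ 0 = (2:ℝ) ^ θ := by
  unfold fth; norm_num

open scoped MatrixOrder in
lemma fact (θ : ℝ) (hθ : 0 ≤ θ) {n : ℕ} (t : Fin n → ℝ) :
    ∃ ξ : Fin n → EuclideanSpace ℂ (Fin n),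
      (∀ i j, (inner ℂ (ξ i) (ξ j) : ℂ) = ((fth θ |t i - t j| : ℝ) : ℂ)) ∧
      ∀ i, ‖ξ i‖ ^ 2 = (2:ℝ) ^ θ := by
  have hP := Mmat_psd θ hθ t
  set S := CFC.sqrt (Mmat θ t) with hS
  have hSH : S.IsHermitian := (CFC.sqrt_nonneg (Mmat θ t)).posSemidef.1
  have hSS : S * S = Mmat θ t := CFC.sqrt_mul_sqrt_self _ hP.nonneg
  have hinner : ∀ i j : Fin n,
      (inner ℂ ((WithLp.equiv 2 (Fin n → ℂ)).symm (fun k => S k i))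
        ((WithLp.equiv 2 (Fin n → ℂ)).symm (fun k => S k j)) : ℂ)
      = ((fth θ |t i - t j| : ℝ) : ℂ) := by
    intro i j
    rw [PiLp.inner_apply]
    simp_rw [RCLike.inner_apply', WithLp.equiv_symm_apply]
    calc ∑ k, (starRingEnd ℂ) (S k i) * S k j = ∑ k, S i k * S k j := by
          refine Finset.sum_congr rfl fun k _ => ?_
          rw [show (starRingEnd ℂ) (S k i) = star (S k i) from rfl, hSH.apply i k]
      _ = (S * S) i j := (Matrix.mul_apply).symm
      _ = ((fth θ |t i - t j| : ℝ) : ℂ) := by rw [hSS]; rfl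
  refine ⟨fun i => (WithLp.equiv 2 (Fin n → ℂ)).symm (fun k => S k i), hinner, ?_⟩
  intro i
  have h := hinner i i
  have h2 : ‖(WithLp.equiv 2 (Fin n → ℂ)).symm (fun k => S k i)‖ ^ 2
      = RCLike.re (inner ℂ ((WithLp.equiv 2 (Fin n → ℂ)).symm (fun k => S k i))
          ((WithLp.equiv 2 (Fin n → ℂ)).symm (fun k => S k i)) : ℂ) :=
    (inner_self_eq_norm_sq _).symm
  rw [h2, h]
  simp [fth_zero]

lemma clm_apply {n : ℕ} (M : Matrix (Fin n) (Fin n) ℂ) (v : EuclideanSpace ℂ (Fin n)) (i : Fin n) :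
    (Matrix.toEuclideanCLM (𝕜 := ℂ) (n := Fin n) M v) i = ∑ j, M i j * v j := by
  rw [Matrix.ofLp_toEuclideanCLM]
  simp [Matrix.mulVec, dotProduct]

lemma schur_bound {n : ℕ} (C : ℝ) (hC : 0 ≤ C) (φ : Matrix (Fin n) (Fin n) ℂ)
    (ξ : Fin n → EuclideanSpace ℂ (Fin n))
    (hfac : ∀ i j, φ i j = (inner ℂ (ξ i) (ξ j) : ℂ))
    (hnorm : ∀ i, ‖ξ i‖ ^ 2 ≤ C) (x : Matrix (Fin n) (Fin n) ℂ) :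
    ‖Matrix.toEuclideanCLM (𝕜 := ℂ) (n := Fin n) (Matrix.of fun i j => φ i j * x i j)‖
      ≤ C * ‖Matrix.toEuclideanCLM (𝕜 := ℂ) (n := Fin n) x‖ := by
  classical
  set A := Matrix.toEuclideanCLM (𝕜 := ℂ) (n := Fin n) x with hA
  set B := Matrix.toEuclideanCLM (𝕜 := ℂ) (n := Fin n)
    (Matrix.of fun i j => φ i j * x i j) with hB
  refine ContinuousLinearMap.opNorm_le_bound _ (mul_nonneg hC (norm_nonneg _)) fun w => ?_
  set u : EuclideanSpace ℂ (Fin n) := B w with hu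
  set P : Fin n → EuclideanSpace ℂ (Fin n) → EuclideanSpace ℂ (Fin n) :=
    fun k v => (WithLp.equiv 2 (Fin n → ℂ)).symm (fun i => v i * ξ i k) with hP
  have hPapp : ∀ k v i, (P k v) i = v i * ξ i k := fun k v i => rfl
  -- key identity
  have key : (inner ℂ u (B w) : ℂ) = ∑ k, (inner ℂ (P k u) (A (P k w)) : ℂ) := by
    have lhs : (inner ℂ u (B w) : ℂ)
        = ∑ i, ∑ j, ∑ k, (starRingEnd ℂ) (u i) * (starRingEnd ℂ) (ξ i k)
            * x i j * w j * ξ j k := by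
      rw [PiLp.inner_apply]
      refine Finset.sum_congr rfl fun i _ => ?_
      rw [RCLike.inner_apply', clm_apply, Finset.mul_sum]
      refine Finset.sum_congr rfl fun j _ => ?_
      rw [Matrix.of_apply, hfac i j, PiLp.inner_apply]
      simp_rw [RCLike.inner_apply']
      rw [Finset.sum_mul, Finset.sum_mul, Finset.mul_sum]
      refine Finset.sum_congr rfl fun k _ => ?_
      ring
    have rhs : ∀ k, (inner ℂ (P k u) (A (P k w)) : ℂ)
        = ∑ i, ∑ j, (starRingEnd ℂ) (u i) * (starRingEnd ℂ) (ξ i k)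
            * x i j * w j * ξ j k := by
      intro k
      rw [PiLp.inner_apply]
      refine Finset.sum_congr rfl fun i _ => ?_
      rw [RCLike.inner_apply', clm_apply, Finset.mul_sum, hPapp]
      refine Finset.sum_congr rfl fun j _ => ?_
      rw [hPapp, _root_.map_mul]
      ring
    rw [lhs]
    rw [show ∑ k, (inner ℂ (P k u) (A (P k w)) : ℂ)
        = ∑ k, ∑ i, ∑ j, (starRingEnd ℂ) (u i) * (starRingEnd ℂ) (ξ i k)
            * x i j * w j * ξ j k from Finset.sum_congr rfl fun k _ => rhs k]
    rw [show (∑ i : Fin n, ∑ j : Fin n, ∑ k : Fin n, (starRingEnd ℂ) (u i)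
          * (starRingEnd ℂ) (ξ i k) * x i j * w j * ξ j k)
        = ∑ i : Fin n, ∑ k : Fin n, ∑ j : Fin n, (starRingEnd ℂ) (u i)
          * (starRingEnd ℂ) (ξ i k) * x i j * w j * ξ j k from
      Finset.sum_congr rfl fun i _ => Finset.sum_comm]
    exact Finset.sum_comm
  -- norms of P k v
  have hPsum : ∀ v : EuclideanSpace ℂ (Fin n),
      ∑ k, ‖P k v‖ ^ 2 ≤ C * ‖v‖ ^ 2 := by
    intro v
    have h1 : ∀ k, ‖P k v‖ ^ 2 = ∑ i, ‖v i‖ ^ 2 * ‖ξ i k‖ ^ 2 := by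
      intro k
      rw [EuclideanSpace.norm_eq, Real.sq_sqrt (by positivity)]
      exact Finset.sum_congr rfl fun i _ => by rw [hPapp, norm_mul, mul_pow]
    have h2 : ∀ i, ‖ξ i‖ ^ 2 = ∑ k, ‖ξ i k‖ ^ 2 := by
      intro i
      rw [EuclideanSpace.norm_eq, Real.sq_sqrt (by positivity)]
    have h3 : ∀ i, ‖v i‖ ^ 2 ≤ ‖v‖ ^ 2 := by
      intro i
      rw [EuclideanSpace.norm_eq, Real.sq_sqrt (by positivity)]
      exact Finset.single_le_sum (f := fun i => ‖v i‖ ^ 2)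
        (fun i _ => by positivity) (Finset.mem_univ i)
    calc ∑ k, ‖P k v‖ ^ 2 = ∑ k, ∑ i, ‖v i‖ ^ 2 * ‖ξ i k‖ ^ 2 :=
          Finset.sum_congr rfl fun k _ => h1 k
      _ = ∑ i, ‖v i‖ ^ 2 * ‖ξ i‖ ^ 2 := by
          rw [Finset.sum_comm]
          exact Finset.sum_congr rfl fun i _ => by rw [h2, Finset.mul_sum]
      _ ≤ ∑ i, ‖v i‖ ^ 2 * C := by
          refine Finset.sum_le_sum fun i _ => ?_
          exact mul_le_mul_of_nonneg_left (hnorm i) (by positivity)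
      _ = C * ∑ i, ‖v i‖ ^ 2 := by rw [← Finset.sum_mul]; ring
      _ = C * ‖v‖ ^ 2 := by
          rw [EuclideanSpace.norm_eq, Real.sq_sqrt (by positivity)]
  -- main estimate
  have hmain : ‖u‖ ^ 2 ≤ C * ‖A‖ * ‖u‖ * ‖w‖ := by
    have e0 : ‖u‖ ^ 2 = RCLike.re (inner ℂ u (B w) : ℂ) := by
      rw [← hu, inner_self_eq_norm_sq]
    have e1 : RCLike.re (inner ℂ u (B w) : ℂ) ≤ ‖(inner ℂ u (B w) : ℂ)‖ :=
      RCLike.re_le_norm _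
    have e2 : ‖(inner ℂ u (B w) : ℂ)‖ ≤ ∑ k, ‖P k u‖ * (‖A‖ * ‖P k w‖) := by
      rw [key]
      refine le_trans (norm_sum_le _ _) (Finset.sum_le_sum fun k _ => ?_)
      refine le_trans (norm_inner_le_norm _ _) ?_
      exact mul_le_mul_of_nonneg_left (A.le_opNorm _) (norm_nonneg _)
    have e3 : ∑ k, ‖P k u‖ * (‖A‖ * ‖P k w‖) = ‖A‖ * ∑ k, ‖P k u‖ * ‖P k w‖ := by
      rw [Finset.mul_sum]
      exact Finset.sum_congr rfl fun k _ => by ring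
    have e4 : ∑ k, ‖P k u‖ * ‖P k w‖ ≤ C * ‖u‖ * ‖w‖ := by
      have cs := Finset.sum_mul_sq_le_sq_mul_sq Finset.univ
        (fun k => ‖P k u‖) (fun k => ‖P k w‖)
      have hnn : (0:ℝ) ≤ ∑ k, ‖P k u‖ * ‖P k w‖ :=
        Finset.sum_nonneg fun k _ => mul_nonneg (norm_nonneg _) (norm_nonneg _)
      nlinarith [hPsum u, hPsum w, sq_nonneg (‖u‖ * ‖w‖), norm_nonneg u, norm_nonneg w,
        mul_nonneg (mul_nonneg hC (norm_nonneg u)) (norm_nonneg w),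
        Finset.sum_nonneg (fun k (_ : k ∈ Finset.univ) =>
          sq_nonneg (‖P k u‖)), Finset.sum_nonneg (fun k (_ : k ∈ Finset.univ) =>
          sq_nonneg (‖P k w‖))]
    calc ‖u‖ ^ 2 ≤ ‖(inner ℂ u (B w) : ℂ)‖ := e0 ▸ e1
      _ ≤ ‖A‖ * ∑ k, ‖P k u‖ * ‖P k w‖ := by rw [← e3]; exact e2
      _ ≤ ‖A‖ * (C * ‖u‖ * ‖w‖) :=
          mul_le_mul_of_nonneg_left e4 (norm_nonneg _)
      _ = C * ‖A‖ * ‖u‖ * ‖w‖ := by ring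
  rcases eq_or_lt_of_le (norm_nonneg u) with h0 | h0
  · rw [show ‖B w‖ = ‖u‖ from rfl, ← h0]
    positivity
  · have : ‖u‖ * ‖u‖ ≤ (C * ‖A‖ * ‖w‖) * ‖u‖ := by nlinarith [hmain]
    have := le_of_mul_le_mul_right this h0
    calc ‖B w‖ = ‖u‖ := by rw [hu]
      _ ≤ C * ‖A‖ * ‖w‖ := this
      _ = C * ‖A‖ * ‖w‖ := rfl

lemma entry_eq_aux {θ a b : ℝ} (ha : 0 < a) (hb : 0 < b) (hab : a ≤ b) :
    (a + b) ^ θ / max a b ^ θ = fth θ |Real.log a - Real.log b| := by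
  have hlog : Real.log a ≤ Real.log b := Real.log_le_log ha hab
  have h1 : Real.exp (-(Real.log b - Real.log a)) = a / b := by
    rw [neg_sub, Real.exp_sub, Real.exp_log ha, Real.exp_log hb]
  rw [abs_of_nonpos (sub_nonpos.2 hlog), neg_sub]
  unfold fth
  rw [h1, max_eq_right hab, ← Real.div_rpow (by linarith) hb.le]
  congr 1
  field_simp
  ring

lemma entry_eq {θ a b : ℝ} (ha : 0 < a) (hb : 0 < b) :
    (a + b) ^ θ / max a b ^ θ = fth θ |Real.log a - Real.log b| := by
  rcases le_total a b with h | h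
  · exact entry_eq_aux ha hb h
  · rw [add_comm, max_comm, abs_sub_comm]
    exact entry_eq_aux hb ha h

noncomputable def matOpNorm {n : ℕ} (A : Matrix (Fin n) (Fin n) ℂ) : ℝ :=
  ‖Matrix.toEuclideanCLM (𝕜 := ℂ) (n := Fin n) A‖

theorem stmt_6 (θ : ℝ) (hθ : θ ∈ Set.Icc (0 : ℝ) 1)
    (n : ℕ) (lam : Fin n → ℝ) (hlam : ∀ i, 0 < lam i) :
    (∃ (H : Type) (_ : NormedAddCommGroup H) (_ : InnerProductSpace ℂ H)
        (ξ η : Fin n → H),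
        (∀ i j, ((lam i + lam j) ^ θ / max (lam i) (lam j) ^ θ : ℝ)
            = (inner ℂ (ξ i) (η j) : ℂ)) ∧
        (⨆ i, ‖ξ i‖) * (⨆ j, ‖η j‖) ≤ 2 ^ θ) ∧
    ∀ x : Matrix (Fin n) (Fin n) ℂ,
      matOpNorm (Matrix.of fun i j =>
          (((lam i + lam j) ^ θ / max (lam i) (lam j) ^ θ : ℝ) : ℂ) * x i j)
        ≤ 2 ^ θ * matOpNorm x := by
  obtain ⟨hθ0, hθ1⟩ := hθ
  set t : Fin n → ℝ := fun i => Real.log (lam i) with ht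
  obtain ⟨ξ, hfac, hnrm⟩ := fact θ hθ0 t
  have hentry : ∀ i j, ((lam i + lam j) ^ θ / max (lam i) (lam j) ^ θ : ℝ)
      = fth θ |t i - t j| := fun i j => entry_eq (hlam i) (hlam j)
  constructor
  · refine ⟨EuclideanSpace ℂ (Fin n), inferInstance, inferInstance, ξ, ξ, ?_, ?_⟩
    · intro i j
      rw [hfac i j, hentry i j]
    · have hnorm_eq : ∀ i, ‖ξ i‖ = Real.sqrt ((2:ℝ) ^ θ) := by
        intro i
        rw [← hnrm i, Real.sqrt_sq (norm_nonneg _)]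
      rcases Nat.eq_zero_or_pos n with hn | hn
      · subst hn
        simp only [Real.iSup_of_isEmpty, mul_zero, zero_mul]
        exact Real.rpow_nonneg (by norm_num) θ
      · have : Nonempty (Fin n) := Fin.pos_iff_nonempty.1 hn
        simp_rw [hnorm_eq]
        rw [ciSup_const]
        rw [Real.mul_self_sqrt (by positivity)]
  · intro x
    have hmx : (Matrix.of fun i j =>
          (((lam i + lam j) ^ θ / max (lam i) (lam j) ^ θ : ℝ) : ℂ) * x i j)
        = Matrix.of fun i j => ((fth θ |t i - t j| : ℝ) : ℂ) * x i j := by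
      ext i j
      simp only [Matrix.of_apply]
      rw [hentry i j]
    rw [matOpNorm, matOpNorm, hmx]
    exact schur_bound ((2:ℝ) ^ θ) (by positivity)
      (Matrix.of fun i j => ((fth θ |t i - t j| : ℝ) : ℂ)) ξ
      (fun i j => (hfac i j).symm) (fun i => le_of_eq (hnrm i)) x
end

section
/- Let d = Σ_{i=1}^k λ_i e_i be a positive invertible operator on a Hilbert space, where λ₁ < … < λ_k are positive reals and e₁,…,e_k are mutually orthogonal projections summing to the identity. Define L_d(x) = dx, R_d(x) = xd on bounded operators. Then for every bounded operator x, the operator Σ_{i,j} (√(λ_i λ_j)/(λ_i + λ_j)) e_i x e_j equals ∫_ℝ e^{it·log d} x e^{−it·log d} dt/(2cosh(πt)), and its operator norm is at most ‖x‖/2. -/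
open Real Complex MeasureTheory Set

lemma two_cosh_pos (t : ℝ) : 0 < 2 * Real.cosh t := by positivity

lemma sech_le_left (t : ℝ) : (2 * Real.cosh t)⁻¹ ≤ rexp (-t) := by
  rw [Real.cosh_eq]
  rw [inv_le_comm₀ (by positivity) (by positivity)]
  rw [← Real.exp_neg, neg_neg]
  have h2 : 0 < rexp (-t) := Real.exp_pos _
  nlinarith

lemma sech_le_right (t : ℝ) : (2 * Real.cosh t)⁻¹ ≤ rexp t := by
  have := sech_le_left (-t)
  rwa [Real.cosh_neg, neg_neg] at this

lemma sech_integrable : Integrable (fun t : ℝ => (2 * Real.cosh (π * t))⁻¹) := by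
  have hc : Continuous (fun t : ℝ => (2 * Real.cosh (π * t))⁻¹) := by
    apply Continuous.inv₀ (by continuity)
    intro t; exact (two_cosh_pos _).ne'
  rw [← integrableOn_univ, ← Set.Iic_union_Ioi (a := (0:ℝ))]
  apply MeasureTheory.IntegrableOn.union
  · apply MeasureTheory.Integrable.mono (integrableOn_exp_Iic 0) hc.aestronglyMeasurable.restrict
    filter_upwards [MeasureTheory.ae_restrict_mem measurableSet_Iic] with t ht
    simp only [Set.mem_Iic] at ht
    rw [Real.norm_eq_abs, Real.norm_eq_abs, abs_of_pos (by positivity), abs_of_pos (Real.exp_pos t)]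
    calc (2 * Real.cosh (π * t))⁻¹ ≤ rexp (π * t) := sech_le_right _
      _ ≤ rexp t := by
        apply Real.exp_le_exp.2
        nlinarith [Real.pi_gt_three]
  · apply MeasureTheory.Integrable.mono (exp_neg_integrableOn_Ioi 0 Real.pi_pos)
      hc.aestronglyMeasurable.restrict
    filter_upwards with t
    rw [Real.norm_eq_abs, Real.norm_eq_abs, abs_of_pos (by positivity), abs_of_pos (Real.exp_pos _)]
    rw [neg_mul]
    exact sech_le_left _

lemma cp_pos (r : ℝ) (hr : 0 < r) (w : ℂ) : (r:ℂ)^w = Complex.exp (↑(Real.log r) * w) := by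
  rw [Complex.cpow_def_of_ne_zero (by exact_mod_cast hr.ne'), Complex.ofReal_log hr.le]

lemma key (s : ℝ) :
    ∫ t : ℝ, ((2 * Real.cosh (π * t) : ℝ) : ℂ)⁻¹ * Complex.exp (Complex.I * (s * t))
      = (((2 * Real.cosh (s / 2) : ℝ) : ℂ))⁻¹ := by
  set a : ℂ := 1/2 + ((s/(2*π) : ℝ) : ℂ) * I with ha
  have hπ : (π:ℂ) ≠ 0 := Complex.ofReal_ne_zero.2 Real.pi_ne_zero
  have hre : a.re = 1/2 := by rw [ha, Complex.add_re, Complex.mul_I_re, Complex.ofReal_im]; norm_num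
  have hre' : (1 - a).re = 1/2 := by simp [Complex.sub_re, hre]; norm_num
  have hcosh_pos : (0:ℝ) < Real.cosh (s/2) := Real.cosh_pos _
  have hcosh_ne : (Real.cosh (s/2) : ℂ) ≠ 0 := by exact_mod_cast hcosh_pos.ne'
  -- Beta = π / sin π a = π / cosh (s/2)
  have hβ : Complex.betaIntegral a (1-a) = ↑π / ↑(Real.cosh (s/2)) := by
    have h1 := Complex.Gamma_mul_Gamma_eq_betaIntegral (s := a) (t := 1-a)
      (by rw [hre]; norm_num) (by rw [hre']; norm_num)
    have h2 : a + (1 - a) = 1 := by ring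
    rw [h2, Complex.Gamma_one, one_mul] at h1
    rw [← h1, Complex.Gamma_mul_Gamma_one_sub]
    congr 1
    have h3 : (π:ℂ) * a = ↑π/2 - (-(↑(s/2) : ℂ)) * I := by
      rw [ha]; push_cast; field_simp; ring
    rw [h3, Complex.sin_pi_div_two_sub, Complex.cos_mul_I,
      show (-(↑(s/2) : ℂ)) = ((-(s/2) : ℝ) : ℂ) by push_cast; ring,
      ← Complex.ofReal_cosh, Real.cosh_neg]
  -- substitution setup
  set φ : ℝ → ℝ := fun t => (1 + rexp (-(2*π*t)))⁻¹ with hφ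
  set f' : ℝ → ℝ := fun t => (2*π) * rexp (-(2*π*t)) * ((1 + rexp (-(2*π*t)))^2)⁻¹ with hf'
  have hden : ∀ t : ℝ, 0 < 1 + rexp (-(2*π*t)) := fun t => by positivity
  have hderiv : ∀ t : ℝ, HasDerivAt φ (f' t) t := by
    intro t
    have h1 : HasDerivAt (fun u : ℝ => -(2*π*u)) (-(2*π)) t := by
      simpa using (hasDerivAt_id t).const_mul (-(2*π))
    have h2 : HasDerivAt (fun u : ℝ => 1 + rexp (-(2*π*u))) (rexp (-(2*π*t)) * -(2*π)) t :=
      (h1.exp).const_add 1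
    have h3 := h2.inv (hden t).ne'
    refine h3.congr_deriv ?_
    rw [hf']
    field_simp
  have hinj : Function.Injective φ := by
    intro t1 t2 h
    simp only [hφ] at h
    have h2 := inv_injective h
    have h3 := add_left_cancel h2
    have h4 := Real.exp_injective h3
    have hπ' := Real.pi_ne_zero
    field_simp at h4
    linarith
  have hrange : φ '' Set.univ = Set.Ioo (0:ℝ) 1 := by
    rw [Set.image_univ]
    ext y
    constructor
    · rintro ⟨t, rfl⟩
      refine ⟨by positivity, ?_⟩
      have h1 : (1:ℝ) < 1 + rexp (-(2*π*t)) := by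
        have := Real.exp_pos (-(2*π*t)); linarith
      exact inv_lt_one_of_one_lt₀ h1
    · rintro ⟨hy0, hy1⟩
      have hyinv : 1 < y⁻¹ := (one_lt_inv₀ hy0).2 hy1
      refine ⟨-Real.log (y⁻¹ - 1) / (2*π), ?_⟩
      have h5 : -(2*π*(-Real.log (y⁻¹-1)/(2*π))) = Real.log (y⁻¹-1) := by
        field_simp
      rw [hφ]
      simp only []
      rw [h5, Real.exp_log (by linarith)]
      rw [show 1 + (y⁻¹ - 1) = y⁻¹ by ring, inv_inv]
  have hbeta_eq : Complex.betaIntegral a (1-a)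
      = ∫ x in Set.Ioo (0:ℝ) 1, ((x:ℂ)^(a-1) * (1-(x:ℂ))^((1-a)-1)) := by
    rw [Complex.betaIntegral, intervalIntegral.integral_of_le zero_le_one,
      MeasureTheory.integral_Ioc_eq_integral_Ioo]
  have hsub : ∫ x in Set.Ioo (0:ℝ) 1, ((x:ℂ)^(a-1) * (1-(x:ℂ))^((1-a)-1))
      = ∫ t : ℝ, |f' t| • ((((φ t) : ℝ):ℂ)^(a-1) * (1-(((φ t):ℝ):ℂ))^((1-a)-1)) := by
    rw [← hrange, integral_image_eq_integral_abs_deriv_smul MeasurableSet.univ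
      (fun t _ => (hderiv t).hasDerivWithinAt) (Set.injOn_of_injective hinj),
      MeasureTheory.setIntegral_univ]
  have hpt : ∀ t : ℝ, |f' t| • ((((φ t):ℝ):ℂ)^(a-1) * (1-(((φ t):ℝ):ℂ))^((1-a)-1))
      = (2*π : ℝ) • (((2 * Real.cosh (π * t) : ℝ) : ℂ)⁻¹ * Complex.exp (Complex.I * (s * t))) := by
    intro t
    set E := rexp (-(2*π*t)) with hE
    have hEpos' : 0 < E := Real.exp_pos _
    have hdpos : 0 < 1 + E := by positivity
    have hφt : φ t = (1+E)⁻¹ := rfl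
    have hφpos : 0 < φ t := by rw [hφt]; positivity
    have h1φ : 1 - φ t = E * (1+E)⁻¹ := by rw [hφt]; field_simp; ring
    have h1φpos : 0 < 1 - φ t := by rw [h1φ]; positivity
    have hcast : (1 : ℂ) - ((φ t : ℝ) : ℂ) = ((1 - φ t : ℝ) : ℂ) := by push_cast; ring
    rw [hcast, cp_pos _ hφpos, cp_pos _ h1φpos, ← Complex.exp_add]
    have hlogφ : Real.log (φ t) = -Real.log (1+E) := by rw [hφt, Real.log_inv]
    have hlog1φ : Real.log (1 - φ t) = -(2*π*t) - Real.log (1+E) := by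
      rw [h1φ, Real.log_mul hEpos'.ne' (by positivity), hE, Real.log_exp, Real.log_inv]; ring
    have hexp_eq : (↑(Real.log (φ t)) * (a-1) + ↑(Real.log (1 - φ t)) * ((1-a)-1) : ℂ)
        = ↑(Real.log (1+E) + π*t) + I * (s*t) := by
      rw [hlogφ, hlog1φ, ha]; push_cast; field_simp; ring
    rw [hexp_eq, Complex.exp_add, ← Complex.ofReal_exp,
      Real.exp_add, Real.exp_log hdpos]
    have hfpos : 0 < f' t := by rw [hf']; positivity
    have hreal : f' t * ((1+E) * rexp (π*t)) = 2*π * (2*Real.cosh (π*t))⁻¹ := by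
      rw [hf', Real.cosh_eq]
      have hEe : E * rexp (π*t) = rexp (-(π*t)) := by
        rw [hE, ← Real.exp_add]; ring_nf
      have hEE : rexp (π*t) * rexp (-(π*t)) = 1 := by
        rw [← Real.exp_add]; simp
      have hY2 : rexp (-(π*t)) * rexp (-(π*t)) = E := by
        rw [hE, ← Real.exp_add]; ring_nf
      have hYpos : 0 < rexp (-(π*t)) := Real.exp_pos _
      have hP : rexp (π*t) = (rexp (-(π*t)))⁻¹ := by rw [Real.exp_neg, inv_inv]
      beta_reduce
      rw [← hE, ← hY2, hP]
      field_simp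
    rw [abs_of_pos hfpos]
    calc (f' t) • ((↑((1+E) * rexp (π*t)) : ℂ) * cexp (I * (s*t)))
        = ↑(f' t * ((1+E) * rexp (π*t))) * cexp (I * (s*t)) := by
          push_cast [Complex.real_smul]; ring
      _ = ↑(2*π * (2*Real.cosh (π*t))⁻¹) * cexp (I * (s*t)) := by rw [hreal]
      _ = (2*π : ℝ) • (((2 * Real.cosh (π * t) : ℝ) : ℂ)⁻¹ * cexp (I * (s * t))) := by
          push_cast [Complex.real_smul]; ring
  have hint : (2*π : ℝ) • ∫ t : ℝ, ((2 * Real.cosh (π * t) : ℝ) : ℂ)⁻¹ * cexp (I * (s*t))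
      = ↑π / ↑(Real.cosh (s/2)) := by
    rw [← integral_smul, ← hβ, hbeta_eq, hsub]
    exact (integral_congr_ae (Filter.Eventually.of_forall fun t => hpt t)).symm ▸ rfl
  have h2π : (0:ℝ) < 2*π := by positivity
  have := hint
  calc ∫ t : ℝ, ((2 * Real.cosh (π * t) : ℝ) : ℂ)⁻¹ * cexp (I * (s*t))
      = (2*π : ℝ)⁻¹ • ((2*π : ℝ) • ∫ t : ℝ, ((2 * Real.cosh (π * t) : ℝ) : ℂ)⁻¹ * cexp (I * (s*t))) := by
        rw [smul_smul, inv_mul_cancel₀ h2π.ne', one_smul]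
    _ = (2*π : ℝ)⁻¹ • (↑π / ↑(Real.cosh (s/2)) : ℂ) := by rw [hint]
    _ = (((2 * Real.cosh (s / 2) : ℝ) : ℂ))⁻¹ := by
        rw [Complex.real_smul]
        push_cast
        field_simp

lemma key_integrable (s : ℝ) : Integrable
    (fun t : ℝ => ((2 * Real.cosh (π * t) : ℝ) : ℂ)⁻¹ * Complex.exp (Complex.I * (s * t))) := by
  have hc : Continuous (fun t : ℝ => ((2 * Real.cosh (π * t) : ℝ) : ℂ)⁻¹ * Complex.exp (Complex.I * (s * t))) := by
    apply Continuous.mul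
    · apply Continuous.inv₀
      · exact Complex.continuous_ofReal.comp (by continuity)
      · intro t
        simp only [ne_eq, Complex.ofReal_eq_zero]
        exact (by positivity : (0:ℝ) < 2 * Real.cosh (π * t)).ne'
    · exact Complex.continuous_exp.comp (by continuity)
  apply MeasureTheory.Integrable.mono sech_integrable hc.aestronglyMeasurable
  filter_upwards with t
  rw [norm_mul]
  have h1 : ‖Complex.exp (Complex.I * (s * t))‖ = 1 := by
    rw [Complex.norm_exp]
    simp
  rw [h1, mul_one]
  have h2 : (0:ℝ) < 2 * Real.cosh (π * t) := by positivity
  rw [norm_inv, Complex.norm_real, Real.norm_eq_abs, Real.norm_eq_abs,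
    abs_of_pos h2, abs_of_pos (inv_pos.2 h2)]

lemma sech_integral : ∫ t : ℝ, (2 * Real.cosh (π * t))⁻¹ = 1/2 := by
  have h := key 0
  simp only [Complex.ofReal_zero, zero_mul, mul_zero, Complex.exp_zero, mul_one] at h
  rw [show ((0:ℝ)/2) = (0:ℝ) by ring, Real.cosh_zero, mul_one] at h
  have h2 : ∫ t : ℝ, ((2 * Real.cosh (π * t) : ℝ) : ℂ)⁻¹
      = ((∫ t : ℝ, (2 * Real.cosh (π * t))⁻¹ : ℝ) : ℂ) := by
    simp_rw [← Complex.ofReal_inv]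
    exact integral_ofReal
  rw [h2] at h
  have h3 : (∫ t : ℝ, (2 * Real.cosh (π * t))⁻¹ : ℝ) = 2⁻¹ := by exact_mod_cast h
  rw [h3]; norm_num

lemma coeff_eq {lami lamj : ℝ} (hi : 0 < lami) (hj : 0 < lamj) :
    (2 * Real.cosh ((Real.log lami - Real.log lamj) / 2))⁻¹
      = Real.sqrt (lami * lamj) / (lami + lamj) := by
  have hsq : ∀ l : ℝ, 0 < l → rexp (Real.log l / 2) = Real.sqrt l := by
    intro l hl
    rw [← Real.log_sqrt hl.le, Real.exp_log (Real.sqrt_pos.2 hl)]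
  set ui := Real.sqrt lami with hui_def
  set uj := Real.sqrt lamj with huj_def
  have hui : 0 < ui := Real.sqrt_pos.2 hi
  have huj : 0 < uj := Real.sqrt_pos.2 hj
  have e1 : rexp ((Real.log lami - Real.log lamj) / 2) = Real.sqrt lami / Real.sqrt lamj := by
    rw [show (Real.log lami - Real.log lamj)/2 = Real.log lami / 2 + -(Real.log lamj / 2) by ring,
      Real.exp_add, Real.exp_neg, hsq _ hi, hsq _ hj, div_eq_mul_inv]
  have e2 : rexp (-((Real.log lami - Real.log lamj) / 2)) = Real.sqrt lamj / Real.sqrt lami := by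
    rw [show -((Real.log lami - Real.log lamj)/2) = Real.log lamj / 2 + -(Real.log lami / 2) by ring,
      Real.exp_add, Real.exp_neg, hsq _ hi, hsq _ hj, div_eq_mul_inv]
  rw [Real.cosh_eq, e1, e2, Real.sqrt_mul hi.le]
  have hi2 : ui * ui = lami := Real.mul_self_sqrt hi.le
  have hj2 : uj * uj = lamj := Real.mul_self_sqrt hj.le
  rw [← hi2, ← hj2]
  field_simp
  ring_nf
  simp [Real.sqrt_sq hui.le, Real.sqrt_sq huj.le]

set_option maxHeartbeats 1000000 in
set_option synthInstance.maxHeartbeats 1000000 in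
theorem stmt_14 (H : Type*) [NormedAddCommGroup H] [InnerProductSpace ℂ H]
    [CompleteSpace H] (k : ℕ) (lam : Fin k → ℝ)
    (hpos : ∀ i, 0 < lam i) (hmono : StrictMono lam)
    (e : Fin k → H →L[ℂ] H)
    (hproj : ∀ i, IsIdempotentElem (e i))
    (hsa : ∀ i, ContinuousLinearMap.adjoint (e i) = e i)
    (horth : ∀ i j, i ≠ j → e i * e j = 0)
    (hsum : ∑ i, e i = 1)
    (u : ℝ → H →L[ℂ] H)
    (hu : ∀ t : ℝ, u t = ∑ i, ((lam i : ℂ) ^ (Complex.I * t)) • e i)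
    (x : H →L[ℂ] H) :
    (∑ i, ∑ j, ((Real.sqrt (lam i * lam j) / (lam i + lam j) : ℝ) : ℂ) •
        (e i * x * e j))
      = (∫ t : ℝ, (2 * Real.cosh (π * t))⁻¹ • (u t * x * u (-t))) ∧
    ‖∑ i, ∑ j, ((Real.sqrt (lam i * lam j) / (lam i + lam j) : ℝ) : ℂ) •
        (e i * x * e j)‖ ≤ ‖x‖ / 2 := by
  have hlam_ne : ∀ i, (lam i : ℂ) ≠ 0 := fun i => by exact_mod_cast (hpos i).ne'
  have hcpow : ∀ (i : Fin k) (t : ℝ), (lam i : ℂ) ^ (Complex.I * (t:ℂ))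
      = Complex.exp (Complex.I * ((Real.log (lam i) : ℂ) * t)) := by
    intro i t
    rw [Complex.cpow_def_of_ne_zero (hlam_ne i), ← Complex.ofReal_log (hpos i).le]
    ring_nf
  -- expansion of the integrand
  have hexpand : ∀ t : ℝ, u t * x * u (-t) = ∑ i, ∑ j,
      Complex.exp (Complex.I * (((Real.log (lam i) - Real.log (lam j)) : ℝ) * (t:ℂ))) •
        (e i * x * e j) := by
    intro t
    rw [hu t, hu (-t)]
    rw [Finset.sum_mul, Finset.sum_mul]
    refine Finset.sum_congr rfl (fun i _ => ?_)
    rw [Finset.mul_sum]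
    refine Finset.sum_congr rfl (fun j _ => ?_)
    rw [smul_mul_assoc, smul_mul_assoc, mul_smul_comm, smul_smul]
    congr 1
    rw [hcpow i t, hcpow j (-t), ← Complex.exp_add]
    congr 1
    push_cast
    ring
  -- the integrand as finite sum
  have hF : ∀ t : ℝ, (2 * Real.cosh (π * t))⁻¹ • (u t * x * u (-t)) = ∑ i, ∑ j,
      (((2 * Real.cosh (π * t) : ℝ) : ℂ)⁻¹ *
        Complex.exp (Complex.I * (((Real.log (lam i) - Real.log (lam j)) : ℝ) * (t:ℂ)))) •
        (e i * x * e j) := by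
    intro t
    rw [hexpand t, Finset.smul_sum]
    refine Finset.sum_congr rfl (fun i _ => ?_)
    rw [Finset.smul_sum]
    refine Finset.sum_congr rfl (fun j _ => ?_)
    rw [← smul_assoc, Complex.real_smul]
    congr 1
    push_cast
    ring
  -- integrability of each term
  have hInt : ∀ i j : Fin k, Integrable (fun t : ℝ =>
      (((2 * Real.cosh (π * t) : ℝ) : ℂ)⁻¹ *
        Complex.exp (Complex.I * (((Real.log (lam i) - Real.log (lam j)) : ℝ) * (t:ℂ)))) •
        (e i * x * e j)) :=
    fun i j => (key_integrable _).smul_const _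
  have h1 : (∫ t : ℝ, (2 * Real.cosh (π * t))⁻¹ • (u t * x * u (-t)))
      = ∑ i, ∑ j, ((Real.sqrt (lam i * lam j) / (lam i + lam j) : ℝ) : ℂ) •
        (e i * x * e j) := by
    rw [MeasureTheory.integral_congr_ae (Filter.Eventually.of_forall hF)]
    rw [integral_finset_sum _ (fun i _ => integrable_finset_sum _ (fun j _ => hInt i j))]
    refine Finset.sum_congr rfl (fun i _ => ?_)
    rw [integral_finset_sum _ (fun j _ => hInt i j)]
    refine Finset.sum_congr rfl (fun j _ => ?_)
    rw [integral_smul_const, key (Real.log (lam i) - Real.log (lam j))]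
    rw [← Complex.ofReal_inv, coeff_eq (hpos i) (hpos j)]
  refine ⟨h1.symm, ?_⟩
  rw [← h1]
  -- unitarity of u t
  have hconj : ∀ (i : Fin k) (t : ℝ), (starRingEnd ℂ) ((lam i : ℂ) ^ (Complex.I * (t:ℂ)))
      = (lam i : ℂ) ^ (Complex.I * ((-t : ℝ) : ℂ)) := by
    intro i t
    rw [hcpow i t, hcpow i (-t), ← Complex.exp_conj]
    congr 1
    rw [map_mul, map_mul, Complex.conj_I, Complex.conj_ofReal, Complex.conj_ofReal]
    push_cast
    ring
  have hstar : ∀ t : ℝ, ContinuousLinearMap.adjoint (u t) = u (-t) := by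
    intro t
    rw [← ContinuousLinearMap.star_eq_adjoint, hu t, hu (-t), star_sum]
    refine Finset.sum_congr rfl (fun i _ => ?_)
    rw [star_smul, ContinuousLinearMap.star_eq_adjoint, hsa i,
      show (star ((lam i:ℂ) ^ (Complex.I * (t:ℂ)))) = (starRingEnd ℂ) ((lam i:ℂ) ^ (Complex.I * (t:ℂ))) from rfl,
      hconj i t]
  have huu : ∀ t : ℝ, u (-t) * u t = 1 := by
    intro t
    rw [hu (-t), hu t, Finset.sum_mul_sum]
    rw [show (1 : H →L[ℂ] H) = ∑ i, e i from hsum.symm]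
    refine Finset.sum_congr rfl (fun i _ => ?_)
    rw [Finset.sum_eq_single i]
    · rw [smul_mul_assoc, mul_smul_comm, smul_smul, (hproj i).eq,
        hcpow i (-t), hcpow i t, ← Complex.exp_add,
        show Complex.I * ((Real.log (lam i) : ℂ) * ((-t : ℝ):ℂ))
            + Complex.I * ((Real.log (lam i) : ℂ) * (t:ℂ)) = 0 by push_cast; ring,
        Complex.exp_zero, one_smul]
    · intro j _ hji
      rw [smul_mul_assoc, mul_smul_comm, horth i j (fun h => hji h.symm)]
      simp
    · intro h
      exact absurd (Finset.mem_univ i) h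
  have hnu : ∀ t : ℝ, ‖u t‖ ≤ 1 := by
    intro t
    refine ContinuousLinearMap.opNorm_le_bound _ zero_le_one (fun ξ => ?_)
    rw [one_mul]
    have hin : (inner ℂ (u t ξ) (u t ξ) : ℂ) = inner ℂ ξ ξ := by
      calc (inner ℂ (u t ξ) (u t ξ) : ℂ)
          = inner ℂ ξ (ContinuousLinearMap.adjoint (u t) (u t ξ)) :=
            (ContinuousLinearMap.adjoint_inner_right (u t) ξ (u t ξ)).symm
        _ = inner ℂ ξ ((u (-t) * u t) ξ) := by rw [hstar t]; rfl
        _ = inner ℂ ξ ξ := by rw [huu t]; rfl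
    have h3 : ‖u t ξ‖ = ‖ξ‖ := by
      rw [norm_eq_sqrt_re_inner (𝕜 := ℂ), norm_eq_sqrt_re_inner (𝕜 := ℂ) ξ, hin]
    exact le_of_eq h3
  have hbound : ∀ t : ℝ, ‖u t * x * u (-t)‖ ≤ ‖x‖ := by
    intro t
    calc ‖u t * x * u (-t)‖ ≤ ‖u t * x‖ * ‖u (-t)‖ := norm_mul_le _ _
      _ ≤ (‖u t‖ * ‖x‖) * ‖u (-t)‖ :=
          mul_le_mul_of_nonneg_right (norm_mul_le _ _) (norm_nonneg _)
      _ ≤ (1 * ‖x‖) * 1 := by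
          apply mul_le_mul
          · exact mul_le_mul_of_nonneg_right (hnu t) (norm_nonneg _)
          · exact hnu (-t)
          · exact norm_nonneg _
          · positivity
      _ = ‖x‖ := by ring
  calc ‖∫ t : ℝ, (2 * Real.cosh (π * t))⁻¹ • (u t * x * u (-t))‖
      ≤ ∫ t : ℝ, ‖(2 * Real.cosh (π * t))⁻¹ • (u t * x * u (-t))‖ :=
        norm_integral_le_integral_norm _
    _ ≤ ∫ t : ℝ, (2 * Real.cosh (π * t))⁻¹ * ‖x‖ := by
        apply integral_mono_of_nonneg
        · exact Filter.Eventually.of_forall (fun t => norm_nonneg _)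
        · exact sech_integrable.mul_const _
        · refine Filter.Eventually.of_forall (fun t => ?_)
          dsimp only
          rw [norm_smul, Real.norm_eq_abs,
            abs_of_pos (by positivity : (0:ℝ) < (2 * Real.cosh (π * t))⁻¹)]
          exact mul_le_mul_of_nonneg_left (hbound t) (by positivity)
    _ = (∫ t : ℝ, (2 * Real.cosh (π * t))⁻¹) * ‖x‖ := integral_mul_const _ _
    _ = ‖x‖ / 2 := by rw [sech_integral]; ring
end
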